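/- Let G be an invertible symmetric real n×n matrix, N a real n×q matrix with NᵀG⁻¹N negative definite, n⁺ ∈ ℝⁿ with N₊ := [N n⁺] satisfying N₊ᵀG⁻¹N₊ invertible, c ∈ ℝⁿ, g(w) = Gw + c, h ∈ ℝ^q, h_p ∈ ℝ. Write P* = (PᵀG⁻¹P)⁻¹PᵀG⁻¹, H = G⁻¹(I − N N*), H₊ = G⁻¹(I − N₊N₊*). Suppose z ∈ ℝⁿ satisfies: Nᵀz + h = 0, n⁺ᵀz + h_p > 0, H₊ g(z) = 0, and u := −N₊* g(z) ≤ 0 componentwise. Set d = H n⁺ and r = −N* n⁺, suppose dᵀn⁺ < 0, let t₂ = −(n⁺ᵀz + h_p)/(dᵀn⁺), and suppose t₂ ≤ u_j/r_j for every j with r_j < 0. Then z̄ = z + t₂ d satisfies: Nᵀz̄ + h = 0 and n⁺ᵀz̄ + h_p = 0; H₊ g(z̄) = 0; −N₊* g(z̄) ≤ 0 componentwise; and N₊ᵀG⁻¹N₊ is negative definite; i.e., (z̄, α ∪ {p}) has all the defining properties of an S-pair for the enlarged active set. -/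

import Mathlib

open Matrix

lemma posDef_unit_aux {M : Matrix Unit Unit ℝ} (h : 0 < M () ()) : M.PosDef := by
  refine Matrix.PosDef.of_dotProduct_mulVec_pos ?_ (fun x hx => ?_)
  · ext i j
    simp [Matrix.conjTranspose_apply]
  · have hx0 : x () ≠ 0 := fun h0 => hx (funext fun u => by cases u; exact h0)
    have : star x ⬝ᵥ M *ᵥ x = M () () * (x () * x ()) := by
      simp [dotProduct, Matrix.mulVec]
      ring
    rw [this]
    exact mul_pos h (mul_self_pos.mpr hx0)

lemma posDef_fromBlocks11_aux {m p : Type*} [Fintype m] [DecidableEq m] [Fintype p]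
    {A : Matrix m m ℝ} (B : Matrix m p ℝ) (D : Matrix p p ℝ) (hA : A.PosDef) [Invertible A]
    (hS : (D - Bᴴ * A⁻¹ * B).PosDef) : (Matrix.fromBlocks A B Bᴴ D).PosDef := by
  refine Matrix.PosDef.of_dotProduct_mulVec_pos ?_ ?_
  · rw [Matrix.IsHermitian.fromBlocks₁₁ _ _ hA.1]
    exact hS.1
  · intro v hv
    rw [← Sum.elim_comp_inl_inr v, Matrix.dotProduct_mulVec,
      Matrix.schur_complement_eq₁₁ B D _ _ hA.1]
    by_cases hy : v ∘ Sum.inr = 0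
    · have hx : v ∘ Sum.inl ≠ 0 := by
        intro hx
        apply hv
        ext (i | i)
        · exact congrFun hx i
        · exact congrFun hy i
      rw [hy]
      simp only [Matrix.mulVec_zero, add_zero, star_zero, Matrix.zero_vecMul,
        dotProduct_zero, zero_dotProduct]
      rw [← Matrix.dotProduct_mulVec]
      exact hA.dotProduct_mulVec_pos hx
    · have h1 : (0:ℝ) ≤ (star (v ∘ Sum.inl + (A⁻¹ * B) *ᵥ (v ∘ Sum.inr))) ᵥ* A ⬝ᵥ
          (v ∘ Sum.inl + (A⁻¹ * B) *ᵥ (v ∘ Sum.inr)) := by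
        rw [← Matrix.dotProduct_mulVec]
        exact (Matrix.posSemidef_iff_dotProduct_mulVec.mp hA.posSemidef).2 _
      have h2 : (0:ℝ) < (star (v ∘ Sum.inr)) ᵥ* (D - Bᴴ * A⁻¹ * B) ⬝ᵥ (v ∘ Sum.inr) := by
        rw [← Matrix.dotProduct_mulVec]
        exact hS.dotProduct_mulVec_pos hy
      linarith

/-- Full step of the dual algorithm: taking the primal step of length
`t₂ = −(n⁺ᵀz + h_p)/(dᵀn⁺)` produces a point with all the defining properties of an
S-pair for the enlarged active set. -/
theorem stmt_14 {n q : ℕ} (G : Matrix (Fin n) (Fin n) ℝ)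
    (hGsym : G.IsSymm) (hG : IsUnit G.det)
    (N : Matrix (Fin n) (Fin q) ℝ)
    (hnd : (-(Nᵀ * G⁻¹ * N)).PosDef)
    (nplus : Fin n → ℝ)
    (Nplus : Matrix (Fin n) (Fin q ⊕ Unit) ℝ)
    (hNplus : Nplus = Matrix.fromCols N (Matrix.replicateCol Unit nplus))
    (hNp : IsUnit (Nplusᵀ * G⁻¹ * Nplus).det)
    (c : Fin n → ℝ) (g : (Fin n → ℝ) → Fin n → ℝ) (hg : ∀ w, g w = G *ᵥ w + c)
    (h : Fin q → ℝ) (hp : ℝ)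
    (H Hplus : Matrix (Fin n) (Fin n) ℝ)
    (hH : H = G⁻¹ * (1 - N * ((Nᵀ * G⁻¹ * N)⁻¹ * Nᵀ * G⁻¹)))
    (hHplus : Hplus = G⁻¹ * (1 - Nplus * ((Nplusᵀ * G⁻¹ * Nplus)⁻¹ * Nplusᵀ * G⁻¹)))
    -- the V-triple conditions at z
    (z : Fin n → ℝ)
    (hact : Nᵀ *ᵥ z + h = 0)
    (hviol : nplus ⬝ᵥ z + hp > 0)
    (hstat : Hplus *ᵥ g z = 0)
    (u : Fin q ⊕ Unit → ℝ)
    (hu : u = -(((Nplusᵀ * G⁻¹ * Nplus)⁻¹ * Nplusᵀ * G⁻¹) *ᵥ g z))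
    (hu0 : ∀ j, u j ≤ 0)
    -- step direction, dual direction and the primal step length
    (d : Fin n → ℝ) (hd : d = H *ᵥ nplus)
    (r : Fin q → ℝ) (hr : r = -(((Nᵀ * G⁻¹ * N)⁻¹ * Nᵀ * G⁻¹) *ᵥ nplus))
    (hdn : d ⬝ᵥ nplus < 0)
    (t₂ : ℝ) (ht₂ : t₂ = -(nplus ⬝ᵥ z + hp) / (d ⬝ᵥ nplus))
    (hmin : ∀ j : Fin q, r j < 0 → t₂ ≤ u (Sum.inl j) / r j)
    (zbar : Fin n → ℝ) (hzbar : zbar = z + t₂ • d) :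
    Nᵀ *ᵥ zbar + h = 0 ∧
    nplus ⬝ᵥ zbar + hp = 0 ∧
    Hplus *ᵥ g zbar = 0 ∧
    (∀ j, (-(((Nplusᵀ * G⁻¹ * Nplus)⁻¹ * Nplusᵀ * G⁻¹) *ᵥ g zbar)) j ≤ 0) ∧
    (-(Nplusᵀ * G⁻¹ * Nplus)).PosDef := by
  have hA : IsUnit (Nᵀ * G⁻¹ * N).det := by
    have h1 := hnd.det_pos
    rw [Matrix.det_neg] at h1
    rcases (mul_pos_iff.mp h1) with ⟨_, h⟩ | ⟨_, h⟩ <;>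
      exact isUnit_iff_ne_zero.mpr (by linarith)
  have hGisym : G⁻¹ᵀ = G⁻¹ := by
    rw [Matrix.transpose_nonsing_inv, hGsym.eq]
  have ht2 : 0 < t₂ := by
    rw [ht₂]; exact div_pos_of_neg_of_neg (by linarith) hdn
  -- Nᵀ * H = 0
  have hNH : Nᵀ * H = 0 := by
    rw [hH]
    simp only [Matrix.mul_sub, Matrix.mul_one, ← Matrix.mul_assoc]
    rw [Matrix.mul_nonsing_inv _ hA]
    simp [Matrix.mul_assoc]
  have hNd : Nᵀ *ᵥ d = 0 := by
    rw [hd, Matrix.mulVec_mulVec, hNH, Matrix.zero_mulVec]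
  -- G * H
  have hGH : G * H = 1 - N * ((Nᵀ * G⁻¹ * N)⁻¹ * Nᵀ * G⁻¹) := by
    rw [hH, ← Matrix.mul_assoc, Matrix.mul_nonsing_inv _ hG, Matrix.one_mul]
  -- G *ᵥ d lies in the range of Nplus
  have hGd : G *ᵥ d = Nplus *ᵥ Sum.elim r (fun _ => (1:ℝ)) := by
    rw [hd, Matrix.mulVec_mulVec, hGH, hNplus, Matrix.fromCols_mulVec_sumElim, hr]
    have hcol : (Matrix.replicateCol Unit nplus) *ᵥ (fun _ => (1:ℝ)) = nplus := by
      ext i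
      simp [Matrix.mulVec, Matrix.replicateCol, dotProduct]
    rw [hcol]
    simp only [Matrix.sub_mulVec, Matrix.one_mulVec, Matrix.mulVec_neg, ← Matrix.mulVec_mulVec]
    abel
  -- pseudoinverse of Nplus kills Nplus
  have key1 : ((Nplusᵀ * G⁻¹ * Nplus)⁻¹ * Nplusᵀ * G⁻¹) * Nplus = 1 := by
    rw [Matrix.mul_assoc, Matrix.mul_assoc, ← Matrix.mul_assoc Nplusᵀ,
      Matrix.nonsing_inv_mul _ hNp]
  have hHpN : Hplus * Nplus = 0 := by
    rw [hHplus, Matrix.mul_assoc, Matrix.sub_mul, Matrix.one_mul, Matrix.mul_assoc, key1,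
      Matrix.mul_one, sub_self, Matrix.mul_zero]
  -- decomposition of g zbar
  have hgzbar : g zbar = g z + t₂ • (G *ᵥ d) := by
    rw [hg, hg, hzbar, Matrix.mulVec_add, Matrix.mulVec_smul]
    ext i
    simp
    ring
  refine ⟨?_, ?_, ?_, ?_, ?_⟩
  · -- old active constraints stay active
    rw [hzbar, Matrix.mulVec_add, Matrix.mulVec_smul, hNd, smul_zero, add_zero, hact]
  · -- new constraint becomes active
    rw [hzbar, dotProduct_add, dotProduct_smul, smul_eq_mul, dotProduct_comm nplus d, ht₂,
      div_mul_cancel₀ _ (ne_of_lt hdn)]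
    ring
  · -- stationarity
    rw [hgzbar, Matrix.mulVec_add, hstat, Matrix.mulVec_smul, hGd, Matrix.mulVec_mulVec, hHpN,
      Matrix.zero_mulVec, smul_zero, add_zero]
  · -- multipliers remain nonpositive
    have hS : ((Nplusᵀ * G⁻¹ * Nplus)⁻¹ * Nplusᵀ * G⁻¹) *ᵥ g zbar =
        -u + t₂ • Sum.elim r (fun _ => (1:ℝ)) := by
      rw [hgzbar, Matrix.mulVec_add, Matrix.mulVec_smul, hGd, Matrix.mulVec_mulVec, key1,
        Matrix.one_mulVec, hu, neg_neg]
    intro j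
    rw [hS]
    rcases j with i | i
    · simp only [Pi.neg_apply, Pi.add_apply, Pi.smul_apply, Sum.elim_inl, smul_eq_mul]
      by_cases hri : r i < 0
      · have := (le_div_iff_of_neg hri).mp (hmin i hri)
        linarith
      · push_neg at hri
        have := hu0 (Sum.inl i)
        nlinarith
    · simp only [Pi.neg_apply, Pi.add_apply, Pi.smul_apply, Sum.elim_inr, smul_eq_mul, mul_one]
      have := hu0 (Sum.inr i)
      cases i
      linarith
  · -- negative definiteness of the enlarged matrix
    haveI : Invertible (-(Nᵀ * G⁻¹ * N)) :=
      Matrix.invertibleOfIsUnitDet _ (isUnit_iff_ne_zero.mpr (ne_of_gt hnd.det_pos))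
    have hct : ∀ (M : Matrix (Fin q) Unit ℝ), Mᴴ = Mᵀ := fun M => by
      ext i j; simp [Matrix.conjTranspose_apply]
    have htr : (Nᵀ * G⁻¹ * Matrix.replicateCol Unit nplus)ᵀ = (Matrix.replicateCol Unit nplus)ᵀ * G⁻¹ * N := by
      rw [Matrix.transpose_mul, Matrix.transpose_mul, hGisym, Matrix.transpose_transpose,
        Matrix.mul_assoc]
    have hBH : (-(Nᵀ * G⁻¹ * Matrix.replicateCol Unit nplus))ᴴ =
        -((Matrix.replicateCol Unit nplus)ᵀ * G⁻¹ * N) := by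
      rw [Matrix.conjTranspose_neg, hct, htr]
    have hBlock : -(Nplusᵀ * G⁻¹ * Nplus) =
        Matrix.fromBlocks (-(Nᵀ * G⁻¹ * N)) (-(Nᵀ * G⁻¹ * Matrix.replicateCol Unit nplus))
          ((-(Nᵀ * G⁻¹ * Matrix.replicateCol Unit nplus))ᴴ)
          (-((Matrix.replicateCol Unit nplus)ᵀ * G⁻¹ * Matrix.replicateCol Unit nplus)) := by
      rw [hBH, hNplus, Matrix.transpose_fromCols, Matrix.fromRows_mul,
        Matrix.fromRows_mul_fromCols, ← Matrix.fromBlocks_neg]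
    have hinvneg : (-(Nᵀ * G⁻¹ * N))⁻¹ = -((Nᵀ * G⁻¹ * N)⁻¹) := by
      apply Matrix.inv_eq_right_inv
      rw [Matrix.neg_mul, Matrix.mul_neg, neg_neg, Matrix.mul_nonsing_inv _ hA]
    have hSchurEq : -((Matrix.replicateCol Unit nplus)ᵀ * G⁻¹ * Matrix.replicateCol Unit nplus) -
        (-(Nᵀ * G⁻¹ * Matrix.replicateCol Unit nplus))ᴴ * (-(Nᵀ * G⁻¹ * N))⁻¹ *
          (-(Nᵀ * G⁻¹ * Matrix.replicateCol Unit nplus)) =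
        -((Matrix.replicateCol Unit nplus)ᵀ * H * Matrix.replicateCol Unit nplus) := by
      rw [hBH, hinvneg, hH]
      simp only [Matrix.neg_mul, Matrix.mul_neg, neg_neg, Matrix.mul_sub, Matrix.sub_mul,
        Matrix.mul_one, Matrix.one_mul, Matrix.mul_assoc, neg_sub]
      abel
    have hSchurPD : (-((Matrix.replicateCol Unit nplus)ᵀ * G⁻¹ * Matrix.replicateCol Unit nplus) -
        (-(Nᵀ * G⁻¹ * Matrix.replicateCol Unit nplus))ᴴ * (-(Nᵀ * G⁻¹ * N))⁻¹ *
          (-(Nᵀ * G⁻¹ * Matrix.replicateCol Unit nplus))).PosDef := by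
      rw [hSchurEq]
      apply posDef_unit_aux
      have hentry : ((Matrix.replicateCol Unit nplus)ᵀ * H * Matrix.replicateCol Unit nplus) () () =
          d ⬝ᵥ nplus := by
        rw [hd, dotProduct_comm]
        simp [Matrix.mul_apply, Matrix.replicateCol, Matrix.transpose_apply, dotProduct, Matrix.mulVec,
          Finset.sum_mul, Finset.mul_sum, mul_assoc]
        rw [Finset.sum_comm]
      simp only [Matrix.neg_apply, hentry]
      linarith
    rw [hBlock]
    exact posDef_fromBlocks11_aux _ _ hnd hSchurPD
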